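/- Let (G,B,m,w) be a connected weighted finite graph with nonempty boundary B such that no edge joins two boundary vertices (E(B,B)=∅). Then σ₂ ≥ w₀ / (d_B · V_B), where V_B = Σ_{x∈B} m_x, w₀ = min_{e∈E} w_e, and d_B = max{d(x,y) : x,y ∈ B}. -/

import Mathlib

open Finset

variable {V : Type*}

/-- The Dirichlet energy `⟨du,du⟩ = ∑_{{x,y}∈E} (u y - u x)^2 w_{xy}` of a function `u`,
where the edge weight `w` is symmetric and vanishes on non-adjacent pairs. -/
noncomputable def energy [Fintype V] (w : V → V → ℝ) (u : V → ℝ) : ℝ :=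
  (1 / 2) * ∑ x, ∑ y, (u y - u x) ^ 2 * w x y

/-- The Dirichlet pairing `⟨du,dv⟩ = ∑_{{x,y}∈E} (u y - u x)(v y - v x) w_{xy}`. -/
noncomputable def dirPairing [Fintype V] (w : V → V → ℝ) (u v : V → ℝ) : ℝ :=
  (1 / 2) * ∑ x, ∑ y, (u y - u x) * (v y - v x) * w x y

/-- The weighted graph Laplacian `Δu(x) = (1/m_x) ∑_y (u y - u x) w_{xy}`. -/
noncomputable def glap [Fintype V] (m : V → ℝ) (w : V → V → ℝ) (u : V → ℝ) (x : V) : ℝ :=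
  (1 / m x) * ∑ y, (u y - u x) * w x y

/-- `d_B`, the maximal graph distance between two boundary vertices. -/
noncomputable def boundaryDiam (G : SimpleGraph V) (B : Finset V) : ℕ :=
  (B ×ˢ B).sup fun p => G.dist p.1 p.2

/-- `w₀`, the minimal edge weight. -/
noncomputable def minEdgeWeight (G : SimpleGraph V) (w : V → V → ℝ) : ℝ :=
  sInf {r : ℝ | ∃ x y, G.Adj x y ∧ w x y = r}

/-- `m₀`, the minimal vertex measure on the boundary. -/
noncomputable def minBoundaryMeasure (B : Finset V) (m : V → ℝ) : ℝ :=
  sInf {r : ℝ | ∃ x ∈ B, m x = r}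

/-- The second Steklov eigenvalue `σ₂`, via its variational characterization: the infimum of
the Rayleigh quotients `E(u)/⟨u,u⟩_B` over functions `u` on `V` whose boundary values are
nonzero and have weighted mean zero.  (Since the harmonic extension minimizes the Dirichlet
energy among all extensions of given boundary data, this agrees with the second eigenvalue of
the Steklov operator.) -/
noncomputable def sigma2 [Fintype V] (B : Finset V) (m : V → ℝ) (w : V → V → ℝ) : ℝ :=
  sInf {r : ℝ | ∃ u : V → ℝ, (∃ x ∈ B, u x ≠ 0) ∧ (∑ x ∈ B, u x * m x = 0) ∧
    r = energy w u / ∑ x ∈ B, (u x) ^ 2 * m x}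

private lemma list_sq_sum_le (l : List ℝ) :
    l.sum ^ 2 ≤ l.length * (l.map (· ^ 2)).sum := by
  have h1 := Fin.sum_univ_getElem l
  have h2 := Fin.sum_univ_fun_getElem l (· ^ 2)
  rw [← h1, ← h2]
  have := sq_sum_le_card_mul_sum_sq (s := (univ : Finset (Fin l.length)))
    (f := fun i => l[i.1])
  simpa using this

private lemma walk_telescope {G : SimpleGraph V} (u : V → ℝ) {x y : V} (p : G.Walk x y) :
    u y - u x = (p.darts.map fun d => u d.toProd.2 - u d.toProd.1).sum := by
  induction p with
  | nil => simp
  | cons h q ih =>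
    simp only [SimpleGraph.Walk.darts_cons, List.map_cons, List.sum_cons]; rw [← ih]; ring

/-- Sum over darts of a path of `(du)² w` is at most `2 · energy`. -/
private lemma darts_sum_le_two_energy [Fintype V] [DecidableEq V] {G : SimpleGraph V}
    (w : V → V → ℝ) (u : V → ℝ)
    (hw_nonneg : ∀ x y, 0 ≤ w x y) {x y : V} (p : G.Walk x y) (hp : p.IsPath) :
    (p.darts.map fun d => (u d.toProd.2 - u d.toProd.1) ^ 2 * w d.toProd.1 d.toProd.2).sum
      ≤ 2 * energy w u := by
  classical
  set F : V × V → ℝ := fun q => (u q.2 - u q.1) ^ 2 * w q.1 q.2 with hF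
  have hFnn : ∀ q : V × V, 0 ≤ F q := fun q => mul_nonneg (sq_nonneg _) (hw_nonneg _ _)
  have hnodup : (p.darts.map SimpleGraph.Dart.toProd).Nodup := by
    have h := hp.isTrail.edges_nodup
    have : p.edges = (p.darts.map SimpleGraph.Dart.toProd).map (fun q : V × V => Sym2.mk q.1 q.2) := by
      rw [SimpleGraph.Walk.edges_eq_map_darts, List.map_map]; rfl
    rw [this] at h
    exact h.of_map _
  have hmap : (p.darts.map fun d => (u d.toProd.2 - u d.toProd.1) ^ 2 * w d.toProd.1 d.toProd.2)
      = (p.darts.map SimpleGraph.Dart.toProd).map F := by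
    rw [List.map_map]; rfl
  rw [hmap, ← List.sum_toFinset _ hnodup]
  have hsub : (p.darts.map SimpleGraph.Dart.toProd).toFinset ⊆ (univ : Finset (V × V)) :=
    subset_univ _
  have h1 : ∑ q ∈ (p.darts.map SimpleGraph.Dart.toProd).toFinset, F q
      ≤ ∑ q : V × V, F q :=
    Finset.sum_le_sum_of_subset_of_nonneg hsub fun q _ _ => hFnn q
  have h2 : ∑ q : V × V, F q = 2 * energy w u := by
    rw [Fintype.sum_prod_type, energy]
    rw [show (2 : ℝ) * ((1 / 2) * ∑ x, ∑ y, (u y - u x) ^ 2 * w x y)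
      = ∑ x, ∑ y, (u y - u x) ^ 2 * w x y by ring]
  linarith

/-- **Perrin's general lower bound** (Theorem 1.2).
For a connected weighted finite graph with nonempty boundary `B` and no edge joining two
boundary vertices, one has `σ₂ ≥ w₀ / (d_B · V_B)` where `V_B = ∑_{x∈B} m_x` and
`w₀ = min_{e∈E} w_e`. -/
theorem perrin_general_lower_bound [Fintype V]
    (G : SimpleGraph V) (hG : G.Connected)
    (B : Finset V) (hB : B.Nonempty)
    (hBB : ∀ x ∈ B, ∀ y ∈ B, ¬ G.Adj x y)
    (m : V → ℝ) (w : V → V → ℝ)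
    (hm : ∀ x, 0 < m x)
    (hw_symm : ∀ x y, w x y = w y x)
    (hw_pos : ∀ x y, G.Adj x y → 0 < w x y)
    (hw_zero : ∀ x y, ¬ G.Adj x y → w x y = 0) :
    sigma2 B m w ≥
      minEdgeWeight G w / ((boundaryDiam G B : ℝ) * ∑ x ∈ B, m x) := by
  classical
  have hw_nonneg : ∀ x y, 0 ≤ w x y := by
    intro x y
    by_cases h : G.Adj x y
    · exact (hw_pos x y h).le
    · rw [hw_zero x y h]
  by_cases hex : ∃ a ∈ B, ∃ c ∈ B, a ≠ c
  · -- main case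
    obtain ⟨a, ha, c, hc, hac⟩ := hex
    set w0 := minEdgeWeight G w with hw0
    set dB := boundaryDiam G B with hdB
    set VB := ∑ x ∈ B, m x with hVB
    have hVBpos : 0 < VB := Finset.sum_pos (fun x _ => hm x) hB
    -- dB positive
    have hdistac : 0 < G.dist a c := by
      have : G.dist a c ≠ 0 :=
        SimpleGraph.dist_ne_zero_iff_ne_and_reachable.mpr ⟨hac, hG.preconnected a c⟩
      omega
    have hdBge : ∀ x ∈ B, ∀ y ∈ B, G.dist x y ≤ dB := by
      intro x hx y hy
      exact Finset.le_sup (f := fun p : V × V => G.dist p.1 p.2) (b := (x, y))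
        (Finset.mem_product.mpr ⟨hx, hy⟩)
    have hdBpos : 0 < dB := lt_of_lt_of_le hdistac (hdBge a ha c hc)
    -- edge weight set properties
    have hsetne : {r : ℝ | ∃ x y, G.Adj x y ∧ w x y = r}.Nonempty := by
      obtain ⟨p, hlen⟩ := hG.exists_walk_length_eq_dist a c
      have : p.darts ≠ [] := by
        intro h
        have : p.length = 0 := by
          rw [← SimpleGraph.Walk.length_darts, h]; rfl
        omega
      obtain ⟨d, hd⟩ := List.exists_mem_of_ne_nil _ this
      exact ⟨w d.toProd.1 d.toProd.2, d.toProd.1, d.toProd.2, d.adj, rfl⟩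
    have hbdd : BddBelow {r : ℝ | ∃ x y, G.Adj x y ∧ w x y = r} := by
      refine ⟨0, ?_⟩
      rintro r ⟨x, y, hadj, rfl⟩
      exact (hw_pos x y hadj).le
    have hw0le : ∀ x y, G.Adj x y → w0 ≤ w x y := by
      intro x y hadj
      exact csInf_le hbdd ⟨x, y, hadj, rfl⟩
    have hw0nn : 0 ≤ w0 := le_csInf hsetne (by rintro r ⟨x, y, hadj, rfl⟩; exact (hw_pos x y hadj).le)
    -- the per-pair bound
    have pair_bound : ∀ u : V → ℝ, ∀ x ∈ B, ∀ y ∈ B,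
        (u x - u y) ^ 2 * w0 ≤ (dB : ℝ) * (2 * energy w u) := by
      intro u x hx y hy
      obtain ⟨p, hpath, hlen⟩ := hG.exists_path_of_dist x y
      set l1 : List ℝ := p.darts.map fun d => u d.toProd.2 - u d.toProd.1 with hl1
      have htel : u y - u x = l1.sum := walk_telescope u p
      have hCS : (u y - u x) ^ 2 ≤ p.length * (l1.map (· ^ 2)).sum := by
        rw [htel]
        have := list_sq_sum_le l1
        rwa [hl1, List.length_map, SimpleGraph.Walk.length_darts] at this
      have hsq_eq : (l1.map (· ^ 2)) = p.darts.map fun d => (u d.toProd.2 - u d.toProd.1) ^ 2 := by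
        rw [hl1, List.map_map]; rfl
      have hEbound : (l1.map (· ^ 2)).sum * w0 ≤ 2 * energy w u := by
        have hsum : (l1.map (· ^ 2)).sum * w0
            = (p.darts.map fun d => (u d.toProd.2 - u d.toProd.1) ^ 2 * w0).sum := by
          rw [hsq_eq, ← List.sum_map_mul_right]
        rw [hsum]
        calc (p.darts.map fun d => (u d.toProd.2 - u d.toProd.1) ^ 2 * w0).sum
            ≤ (p.darts.map fun d =>
                (u d.toProd.2 - u d.toProd.1) ^ 2 * w d.toProd.1 d.toProd.2).sum := by
              apply List.sum_le_sum
              intro d _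
              exact mul_le_mul_of_nonneg_left (hw0le _ _ d.adj) (sq_nonneg _)
          _ ≤ 2 * energy w u := darts_sum_le_two_energy w u hw_nonneg p hpath
      have hsqnn : 0 ≤ (l1.map (· ^ 2)).sum := by
        apply List.sum_nonneg; intro r hr
        obtain ⟨s, _, rfl⟩ := List.mem_map.mp hr; positivity
      have hlen_le : (p.length : ℝ) ≤ (dB : ℝ) := by
        exact_mod_cast hlen ▸ hdBge x hx y hy
      calc (u x - u y) ^ 2 * w0 = (u y - u x) ^ 2 * w0 := by ring
        _ ≤ (p.length * (l1.map (· ^ 2)).sum) * w0 :=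
            mul_le_mul_of_nonneg_right hCS hw0nn
        _ = (p.length : ℝ) * ((l1.map (· ^ 2)).sum * w0) := by ring
        _ ≤ (dB : ℝ) * (2 * energy w u) := by
            apply mul_le_mul hlen_le hEbound (mul_nonneg hsqnn hw0nn)
            positivity
    -- S nonempty
    set S := {r : ℝ | ∃ u : V → ℝ, (∃ x ∈ B, u x ≠ 0) ∧ (∑ x ∈ B, u x * m x = 0) ∧
      r = energy w u / ∑ x ∈ B, (u x) ^ 2 * m x} with hS
    have hSne : S.Nonempty := by
      set u0 : V → ℝ := fun v => if v = a then m c else if v = c then -(m a) else 0 with hu0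
      refine ⟨energy w u0 / ∑ x ∈ B, (u0 x) ^ 2 * m x, u0, ⟨a, ha, ?_⟩, ?_, rfl⟩
      · simp [hu0, (hm c).ne']
      · have hzero : ∀ x ∈ B, x ≠ a ∧ x ≠ c → u0 x * m x = 0 := by
          intro x _ ⟨hxa, hxc⟩; simp [hu0, hxa, hxc]
        rw [Finset.sum_eq_add_of_mem a c ha hc hac hzero]
        rw [show u0 a = m c by simp [hu0], show u0 c = -(m a) by simp [hu0, hac.symm]]
        ring
    -- bound for each element
    rw [sigma2, ← hS]
    refine le_csInf hSne ?_
    rintro r ⟨u, ⟨x0, hx0B, hx0⟩, hmean, rfl⟩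
    set Q := ∑ x ∈ B, (u x) ^ 2 * m x with hQ
    have hQpos : 0 < Q := by
      apply Finset.sum_pos' (fun x _ => mul_nonneg (sq_nonneg _) (hm x).le)
      exact ⟨x0, hx0B, mul_pos (by positivity) (hm x0)⟩
    have hEnn : 0 ≤ energy w u := by
      rw [energy]
      apply mul_nonneg (by norm_num)
      apply Finset.sum_nonneg; intro x _
      apply Finset.sum_nonneg; intro y _
      exact mul_nonneg (sq_nonneg _) (hw_nonneg x y)
    -- key double-sum identity
    have hexpand : ∑ x ∈ B, ∑ y ∈ B, (u x - u y) ^ 2 * (m x * m y) = 2 * VB * Q := by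
      have inner : ∀ x : V, ∑ y ∈ B, (u x - u y) ^ 2 * (m x * m y)
          = (u x ^ 2 * m x) * VB + m x * Q - 2 * (u x * m x) * (∑ y ∈ B, u y * m y) := by
        intro x
        have hterm : ∀ y ∈ B, (u x - u y) ^ 2 * (m x * m y)
            = (u x ^ 2 * m x) * m y + m x * (u y ^ 2 * m y)
              - 2 * (u x * m x) * (u y * m y) := fun y _ => by ring
        rw [Finset.sum_congr rfl hterm, Finset.sum_sub_distrib, Finset.sum_add_distrib,
          ← Finset.mul_sum, ← Finset.mul_sum, ← Finset.mul_sum, ← hVB, ← hQ]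
      calc ∑ x ∈ B, ∑ y ∈ B, (u x - u y) ^ 2 * (m x * m y)
          = ∑ x ∈ B, ((u x ^ 2 * m x) * VB + m x * Q - 2 * (u x * m x) * 0) := by
            apply Finset.sum_congr rfl; intro x _; rw [inner x, hmean]
        _ = (∑ x ∈ B, u x ^ 2 * m x) * VB + (∑ x ∈ B, m x) * Q := by
            rw [Finset.sum_sub_distrib, Finset.sum_add_distrib, ← Finset.sum_mul,
              ← Finset.sum_mul]
            simp
        _ = 2 * VB * Q := by rw [← hQ, ← hVB]; ring
    -- summing the per-pair bound
    have hsum_bound : w0 * (2 * VB * Q) ≤ (dB : ℝ) * (2 * energy w u) * (VB * VB) := by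
      rw [← hexpand]
      calc w0 * ∑ x ∈ B, ∑ y ∈ B, (u x - u y) ^ 2 * (m x * m y)
          = ∑ x ∈ B, ∑ y ∈ B, ((u x - u y) ^ 2 * w0) * (m x * m y) := by
            rw [Finset.mul_sum]
            apply Finset.sum_congr rfl; intro x _
            rw [Finset.mul_sum]
            apply Finset.sum_congr rfl; intro y _; ring
        _ ≤ ∑ x ∈ B, ∑ y ∈ B, ((dB : ℝ) * (2 * energy w u)) * (m x * m y) := by
            apply Finset.sum_le_sum; intro x hx
            apply Finset.sum_le_sum; intro y hy
            exact mul_le_mul_of_nonneg_right (pair_bound u x hx y hy)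
              (mul_nonneg (hm x).le (hm y).le)
        _ = (dB : ℝ) * (2 * energy w u) * (VB * VB) := by
            simp_rw [← Finset.mul_sum]
            rw [← hVB, ← Finset.sum_mul, ← hVB]
    -- conclude
    rw [div_le_div_iff₀ (by positivity) hQpos]
    nlinarith [hsum_bound, hVBpos, hQpos, mul_pos hVBpos hQpos]
  · -- degenerate case: B is a singleton, RHS = 0
    push_neg at hex
    have hdB0 : boundaryDiam G B = 0 := by
      rw [boundaryDiam]
      apply Nat.le_antisymm _ (Nat.zero_le _)
      apply Finset.sup_le
      rintro ⟨x, y⟩ hxy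
      rw [Finset.mem_product] at hxy
      have : x = y := hex x hxy.1 y hxy.2
      simp [this]
    rw [hdB0]
    simp only [Nat.cast_zero, zero_mul, div_zero, ge_iff_le]
    apply Real.sInf_nonneg
    rintro r ⟨u, _, _, rfl⟩
    apply div_nonneg
    · rw [energy]
      apply mul_nonneg (by norm_num)
      apply Finset.sum_nonneg; intro x _
      apply Finset.sum_nonneg; intro y _
      exact mul_nonneg (sq_nonneg _) (hw_nonneg x y)
    · apply Finset.sum_nonneg; intro x _
      exact mul_nonneg (sq_nonneg _) (hm x).le
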